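/- For n ≥ 1, the number of subsets S ⊆ {1,...,n} that arise as the set of positions of flat steps of some Łukasiewicz path of length n equals 2^n − n. Equivalently, S arises as such a set if and only if |S| ≠ n − 1. -/

import Mathlib

/-- A Łukasiewicz path: vertical step components, each `≥ -1`, all partial sums
nonnegative, total sum `0`. -/
def IsLukas (w : List ℤ) : Prop :=
  (∀ s ∈ w, -1 ≤ s) ∧ (∀ k, 0 ≤ (w.take k).sum) ∧ w.sum = 0

/-- The set of (1-indexed) positions of flat steps `F = (1,0)` of `w`. -/
def flatPos (w : List ℤ) : Finset ℕ :=
  (Finset.Icc 1 w.length).filter fun j => w[j - 1]? = some 0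

lemma luk_exists (n : ℕ) (hn : 1 ≤ n) (S : Finset ℕ) (hS : S ⊆ Finset.Icc 1 n)
    (hcard : S.card ≠ n - 1) :
    ∃ w : List ℤ, IsLukas w ∧ w.length = n ∧ flatPos w = S := by
  classical
  set T : Finset ℕ := Finset.Icc 1 n \ S with hT
  have hIcc : (Finset.Icc 1 n).card = n := by simp [Nat.card_Icc]
  have hTS : T.card + S.card = n := by
    rw [hT, Finset.card_sdiff_add_card_eq_card hS, hIcc]
  have hk : T.card ≠ 1 := by omega
  have hTsub : T ⊆ Finset.Icc 1 n := Finset.sdiff_subset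
  by_cases hT0 : T.card = 0
  · -- all-flat path
    have hSe : S = Finset.Icc 1 n := by
      apply Finset.eq_of_subset_of_card_le hS; rw [hIcc]; omega
    refine ⟨List.replicate n 0, ⟨?_, ?_, ?_⟩, by simp, ?_⟩
    · intro s hs; rw [List.eq_of_mem_replicate hs]; norm_num
    · intro m; rw [List.take_replicate]; simp
    · simp
    · rw [hSe]; ext j
      simp only [flatPos, Finset.mem_filter, List.length_replicate, Finset.mem_Icc]
      constructor
      · rintro ⟨h, -⟩; exact h
      · rintro ⟨h1, h2⟩
        refine ⟨⟨h1, h2⟩, ?_⟩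
        rw [List.getElem?_eq_getElem (by simp; omega)]
        simp
  · have hk2 : 2 ≤ T.card := by omega
    have hTne : T.Nonempty := Finset.card_pos.mp (by omega)
    set j₀ : ℕ := T.min' hTne with hj₀
    have hj₀T : j₀ ∈ T := T.min'_mem hTne
    have hj₀Icc : j₀ ∈ Finset.Icc 1 n := hTsub hj₀T
    have hj₀1 : 1 ≤ j₀ := (Finset.mem_Icc.mp hj₀Icc).1
    have hj₀n : j₀ ≤ n := (Finset.mem_Icc.mp hj₀Icc).2
    set g : ℕ → ℤ := fun j =>
      (if j ∈ T then (-1 : ℤ) else 0) + (if j = j₀ then (T.card : ℤ) else 0) with hg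
    set w : List ℤ := (List.range n).map (fun i => g (i + 1)) with hw
    have hlen : w.length = n := by simp [hw]
    -- counting function
    set cnt : ℕ → ℕ := fun m => ((Finset.range m).filter (fun i => i + 1 ∈ T)).card
      with hcnt
    have hcnt_le : ∀ m, cnt m ≤ T.card := by
      intro m
      apply Finset.card_le_card_of_injOn (fun i => i + 1)
      · intro i hi; exact (Finset.mem_filter.mp hi).2
      · intro a _ b _ h; simpa using h
    have hcnt_n : cnt n = T.card := by
      apply Finset.card_bij (fun i _ => i + 1)
      · intro i hi; exact (Finset.mem_filter.mp hi).2
      · intro a ha b hb h; simpa using h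
      · intro j hj
        have hjIcc := Finset.mem_Icc.mp (hTsub hj)
        exact ⟨j - 1, Finset.mem_filter.mpr ⟨Finset.mem_range.mpr (by omega),
          by have : j - 1 + 1 = j := by omega
             rw [this]; exact hj⟩, by omega⟩
    have hcnt_zero : ∀ m, j₀ - 1 ∉ Finset.range m → cnt m = 0 := by
      intro m hm
      rw [hcnt]
      convert Finset.card_empty
      rw [Finset.filter_eq_empty_iff]
      intro i hi hiT
      have := T.min'_le _ hiT
      exact hm (Finset.mem_range.mpr (by
        rw [Finset.mem_range] at hi; omega))
    -- prefix sums
    have hsum : ∀ m, ((List.range m).map (fun i => g (i + 1))).sum =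
        (-(cnt m : ℤ)) + (if j₀ - 1 ∈ Finset.range m then (T.card : ℤ) else 0) := by
      intro m
      have hrfl : ((List.range m).map (fun i => g (i + 1))).sum
          = ∑ i ∈ Finset.range m, g (i + 1) := rfl
      have e1 : ∑ i ∈ Finset.range m, (if i + 1 ∈ T then (-1:ℤ) else 0)
          = -(cnt m : ℤ) := by
        rw [← Finset.sum_filter, Finset.sum_const, hcnt]; simp
      have e2 : ∑ i ∈ Finset.range m, (if i + 1 = j₀ then (T.card:ℤ) else 0)
          = (if j₀ - 1 ∈ Finset.range m then (T.card : ℤ) else 0) := by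
        rw [show (fun i => if i + 1 = j₀ then (T.card : ℤ) else 0)
            = fun i => if i = j₀ - 1 then (T.card : ℤ) else 0 from
          funext fun i => if_congr (by omega) rfl rfl]
        exact Finset.sum_ite_eq' _ _ _
      rw [hrfl, hg]
      dsimp only
      rw [Finset.sum_add_distrib, e1, e2]
    refine ⟨w, ⟨?_, ?_, ?_⟩, hlen, ?_⟩
    · intro s hs
      rw [hw, List.mem_map] at hs
      obtain ⟨i, -, rfl⟩ := hs
      rw [hg]
      dsimp only
      have : (0:ℤ) ≤ T.card := by positivity
      split_ifs <;> omega
    · intro m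
      rw [hw, ← List.map_take, List.take_range, hsum]
      have h1 := hcnt_le (min m n)
      by_cases h : j₀ - 1 ∈ Finset.range (min m n)
      · simp only [h, if_true]
        have : (cnt (min m n) : ℤ) ≤ (T.card : ℤ) := by exact_mod_cast h1
        omega
      · simp only [h, if_false, hcnt_zero _ h]
        simp
    · rw [hw, hsum]
      have h : j₀ - 1 ∈ Finset.range n := Finset.mem_range.mpr (by omega)
      simp [h, hcnt_n]
    · ext j
      simp only [flatPos, Finset.mem_filter, hlen, Finset.mem_Icc]
      constructor
      · rintro ⟨⟨h1, h2⟩, h3⟩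
        rw [hw, List.getElem?_map,
          List.getElem?_range (by omega)] at h3
        simp only [Option.map_some, Option.some.injEq] at h3
        have hjj : j - 1 + 1 = j := by omega
        rw [hjj] at h3
        by_contra hjS
        have hjT : j ∈ T := by rw [hT]; exact Finset.mem_sdiff.mpr ⟨Finset.mem_Icc.mpr ⟨h1, h2⟩, hjS⟩
        rw [hg] at h3
        simp only [hjT, if_true] at h3
        by_cases hje : j = j₀ <;> simp [hje] at h3 <;> omega
      · intro hjS
        have hjIcc := Finset.mem_Icc.mp (hS hjS)
        have hjT : j ∉ T := by rw [hT]; simp [hjS]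
        have hjne : j ≠ j₀ := fun h => hjT (h ▸ hj₀T)
        refine ⟨hjIcc, ?_⟩
        rw [hw, List.getElem?_map,
          List.getElem?_range (by omega)]
        simp only [Option.map_some, Option.some.injEq]
        have hjj : j - 1 + 1 = j := by omega
        rw [hjj, hg]
        simp [hjT, hjne]

lemma luk_card (n : ℕ) (hn : 1 ≤ n) (w : List ℤ) (hL : IsLukas w) (hlen : w.length = n) :
    (flatPos w).card ≠ n - 1 := by
  classical
  intro hcard
  set S := flatPos w with hSdef
  have hS : S ⊆ Finset.Icc 1 n := by
    rw [hSdef, flatPos, hlen]; exact Finset.filter_subset _ _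
  have hIcc : (Finset.Icc 1 n).card = n := by simp [Nat.card_Icc]
  have hT1 : (Finset.Icc 1 n \ S).card = 1 := by
    rw [Finset.card_sdiff_of_subset hS, hIcc, hcard]; omega
  obtain ⟨j, hj⟩ := Finset.card_eq_one.mp hT1
  have hjmem : j ∈ Finset.Icc 1 n \ S := hj ▸ Finset.mem_singleton_self j
  obtain ⟨hjIcc, hjS⟩ := Finset.mem_sdiff.mp hjmem
  have hjIcc' := Finset.mem_Icc.mp hjIcc
  -- every other entry is zero
  have hzero : ∀ i : Fin w.length, (i : ℕ) ≠ j - 1 → w.get i = 0 := by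
    intro i hi
    have hp : (i : ℕ) + 1 ∈ S := by
      by_contra hpS
      have : (i : ℕ) + 1 ∈ Finset.Icc 1 n \ S := by
        refine Finset.mem_sdiff.mpr ⟨Finset.mem_Icc.mpr ⟨by omega, ?_⟩, hpS⟩
        have := i.isLt; omega
      rw [hj, Finset.mem_singleton] at this
      omega
    rw [hSdef, flatPos, Finset.mem_filter] at hp
    have h2 := hp.2
    simp only [Nat.add_sub_cancel] at h2
    rw [List.getElem?_eq_getElem i.isLt] at h2
    exact Option.some.injEq _ _ ▸ (by simpa using h2)
  have hjlt : j - 1 < w.length := by omega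
  have hsum : w.sum = w.get ⟨j - 1, hjlt⟩ := by
    conv_lhs => rw [← List.ofFn_get w]
    rw [List.sum_ofFn]
    exact Fintype.sum_eq_single _ (fun i hi => hzero i (by
      intro h
      exact hi (Fin.ext h)))
  have hget0 : w.get ⟨j - 1, hjlt⟩ = 0 := by rw [← hsum]; exact hL.2.2
  have : j ∈ S := by
    rw [hSdef, flatPos, Finset.mem_filter]
    refine ⟨by rwa [hlen], ?_⟩
    rw [List.getElem?_eq_getElem hjlt]; simpa using hget0
  exact hjS this

/-- For `n ≥ 1`, the number of subsets `S ⊆ {1,…,n}` arising as the set of flat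
positions of some Łukasiewicz path of length `n` is `2^n - n`; moreover such an
`S` arises iff `|S| ≠ n - 1`. -/
theorem flat_position_sets (n : ℕ) (hn : 1 ≤ n) :
    Set.ncard {S : Finset ℕ |
        ∃ w : List ℤ, IsLukas w ∧ w.length = n ∧ flatPos w = S} = 2 ^ n - n ∧
    ∀ S : Finset ℕ, S ⊆ Finset.Icc 1 n →
      ((∃ w : List ℤ, IsLukas w ∧ w.length = n ∧ flatPos w = S) ↔ S.card ≠ n - 1) := by
  classical
  have hiff : ∀ S : Finset ℕ, S ⊆ Finset.Icc 1 n →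
      ((∃ w : List ℤ, IsLukas w ∧ w.length = n ∧ flatPos w = S) ↔ S.card ≠ n - 1) := by
    intro S hS
    constructor
    · rintro ⟨w, hL, hlen, rfl⟩
      exact luk_card n hn w hL hlen
    · intro h
      exact luk_exists n hn S hS h
  refine ⟨?_, hiff⟩
  have hset : {S : Finset ℕ |
      ∃ w : List ℤ, IsLukas w ∧ w.length = n ∧ flatPos w = S} =
      ↑((Finset.Icc 1 n).powerset.filter (fun S => S.card ≠ n - 1)) := by
    ext S
    simp only [Set.mem_setOf_eq, Finset.coe_filter, Finset.mem_powerset, Set.mem_setOf_eq]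
    constructor
    · rintro ⟨w, hL, hlen, rfl⟩
      have hsub : flatPos w ⊆ Finset.Icc 1 n := by
        rw [flatPos, hlen]; exact Finset.filter_subset _ _
      exact ⟨hsub, luk_card n hn w hL hlen⟩
    · rintro ⟨hsub, hc⟩
      exact (hiff S hsub).mpr hc
  rw [hset, Set.ncard_coe_finset]
  have key := Finset.card_filter_add_card_filter_not
    (s := (Finset.Icc 1 n).powerset) (p := fun S => S.card = n - 1)
  have h1 : ((Finset.Icc 1 n).powerset.filter (fun S => S.card = n - 1)).card = n := by
    rw [← Finset.powersetCard_eq_filter, Finset.card_powersetCard]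
    have : (Finset.Icc 1 n).card = n := by simp [Nat.card_Icc]
    rw [this, Nat.choose_symm hn, Nat.choose_one_right]
  have h2 : (Finset.Icc 1 n).powerset.card = 2 ^ n := by
    rw [Finset.card_powerset]
    congr 1
    simp [Nat.card_Icc]
  have h3 : (Finset.powerset (Finset.Icc 1 n)).filter (fun S => ¬ S.card = n - 1)
      = (Finset.Icc 1 n).powerset.filter (fun S => S.card ≠ n - 1) := rfl
  rw [h1, h3, h2] at key
  omega
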